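/- For an odd prime p and an integer a coprime to p, the Legendre symbol (a/p) equals the sign of the permutation of ℤ/pℤ given by multiplication by a. -/
import Mathlib

open Equiv Equiv.Perm

section aux
variable (p : ℕ) [Fact p.Prime]

lemma zol_sign_gen (hp : p ≠ 2) (g : (ZMod p)ˣ) (hg : ∀ x : (ZMod p)ˣ, x ∈ Subgroup.zpowers g) :
    Equiv.Perm.sign (MulAction.toPerm g : Equiv.Perm (ZMod p)) = -1 := by
  have hp1 : 2 < p := lt_of_le_of_ne (Fact.out : p.Prime).two_le (Ne.symm hp)
  have hcard : Fintype.card (ZMod p)ˣ = p - 1 := ZMod.card_units_eq_totient p ▸ Nat.totient_prime Fact.out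
  have horder : orderOf g = p - 1 := by
    rw [← hcard]; simpa [Nat.card_eq_fintype_card] using orderOf_eq_card_of_forall_mem_zpowers hg
  have hg1 : g ≠ 1 := by
    intro h; rw [h, orderOf_one] at horder; omega
  set σ : Equiv.Perm (ZMod p) := MulAction.toPerm g with hσ
  have hfix : ∀ x : ZMod p, σ x ≠ x ↔ x ≠ 0 := by
    intro x
    constructor
    · intro h hx; apply h; simp [hσ, hx, MulAction.toPerm_apply]
    · intro hx h
      have : (g : ZMod p) * x = x := h
      have : ((g : ZMod p) - 1) * x = 0 := by ring_nf; linear_combination this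
      rcases mul_eq_zero.mp this with h1 | h1
      · exact hg1 (Units.ext (by rwa [sub_eq_zero] at h1))
      · exact hx h1
  have hcyc : σ.IsCycle := by
    refine ⟨1, ?_, ?_⟩
    · rw [hfix]; exact one_ne_zero
    · intro y hy
      have hy0 : y ≠ 0 := (hfix y).mp hy
      obtain ⟨n, hn⟩ := hg (Units.mk0 y hy0)
      refine ⟨n, ?_⟩
      have : σ ^ n = MulAction.toPerm (g ^ n) := by
        simpa using (map_zpow (MulAction.toPermHom (ZMod p)ˣ (ZMod p)) g n).symm
      rw [this, MulAction.toPerm_apply]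
      show ((g ^ n : (ZMod p)ˣ) : ZMod p) * 1 = y
      simp only at hn
      rw [mul_one, hn, Units.val_mk0]
  have hsupp : σ.support = Finset.univ \ {0} := by
    ext x
    simp [Equiv.Perm.mem_support, hfix x, Finset.mem_sdiff]
  have hcardsupp : σ.support.card = p - 1 := by
    rw [hsupp, Finset.card_sdiff_of_subset (by simp)]
    simp [ZMod.card p]
  have heven : Even (p - 1) := (Fact.out : p.Prime).even_sub_one hp
  rw [hcyc.sign, hcardsupp, Even.neg_one_pow heven]

lemma zol_char_gen (hp : p ≠ 2) (g : (ZMod p)ˣ) (hg : ∀ x : (ZMod p)ˣ, x ∈ Subgroup.zpowers g) :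
    quadraticChar (ZMod p) (g : ZMod p) = -1 := by
  have hp1 : 2 < p := lt_of_le_of_ne (Fact.out : p.Prime).two_le (Ne.symm hp)
  have hcard : Fintype.card (ZMod p)ˣ = p - 1 :=
    ZMod.card_units_eq_totient p ▸ Nat.totient_prime Fact.out
  have horder : orderOf g = p - 1 := by
    rw [← hcard]; simpa [Nat.card_eq_fintype_card] using orderOf_eq_card_of_forall_mem_zpowers hg
  rw [quadraticChar_neg_one_iff_not_isSquare]
  intro hsq
  have hchar : ringChar (ZMod p) ≠ 2 := by
    rw [ZMod.ringChar_zmod_n]; exact hp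
  have h1 : (g : ZMod p) ^ (Fintype.card (ZMod p) / 2) = 1 :=
    (FiniteField.isSquare_iff hchar (g : (ZMod p)ˣ).ne_zero).mp hsq
  rw [ZMod.card p] at h1
  have h2 : orderOf (g : ZMod p) ∣ p / 2 := orderOf_dvd_of_pow_eq_one h1
  rw [orderOf_units, horder] at h2
  have := Nat.le_of_dvd (by omega) h2
  omega

end aux

/-- Zolotarev's lemma: for an odd prime `p` and `a` coprime to `p`, the Legendre
symbol `(a/p)` equals the sign of the permutation of `ℤ/pℤ` given by
multiplication by `a`. -/
theorem zolotarev_lemma (p : ℕ) [Fact p.Prime] (hp : p ≠ 2) (a : ℤ)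
    (ha : IsCoprime a (p : ℤ)) :
    legendreSym p a =
      (Equiv.Perm.sign (Equiv.mulLeft₀ (a : ZMod p)
        (fun h => by
          have hd : (p : ℤ) ∣ a := (ZMod.intCast_zmod_eq_zero_iff_dvd a p).mp h
          exact (Int.prime_iff_natAbs_prime.mpr (by simpa using (Fact.out : p.Prime))).not_unit
            (ha.isUnit_of_dvd' hd dvd_rfl))) : ℤ) := by
  have ha0 : (a : ZMod p) ≠ 0 := fun h => by
    have hd : (p : ℤ) ∣ a := (ZMod.intCast_zmod_eq_zero_iff_dvd a p).mp h
    exact (Int.prime_iff_natAbs_prime.mpr (by simpa using (Fact.out : p.Prime))).not_unit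
      (ha.isUnit_of_dvd' hd dvd_rfl)
  set b : (ZMod p)ˣ := Units.mk0 _ ha0 with hb
  obtain ⟨g, hg⟩ := IsCyclic.exists_generator (α := (ZMod p)ˣ)
  obtain ⟨k, hk⟩ := mem_powers_iff_mem_zpowers.mpr (hg b)
  simp only at hk
  -- LHS
  have hL : legendreSym p a = (-1) ^ k := by
    show quadraticChar (ZMod p) (a : ZMod p) = (-1) ^ k
    have : (a : ZMod p) = ((g : ZMod p)) ^ k := by
      rw [← Units.val_pow_eq_pow_val, hk, hb, Units.val_mk0]
    rw [this, map_pow, zol_char_gen p hp g hg]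
  -- RHS
  have hperm : (Equiv.mulLeft₀ (a : ZMod p) (fun h => by
          have hd : (p : ℤ) ∣ a := (ZMod.intCast_zmod_eq_zero_iff_dvd a p).mp h
          exact (Int.prime_iff_natAbs_prime.mpr (by simpa using (Fact.out : p.Prime))).not_unit
            (ha.isUnit_of_dvd' hd dvd_rfl))) = MulAction.toPerm b := by
    ext x
    simp [MulAction.toPerm_apply, hb, Units.smul_def, Units.smul_mk0, smul_eq_mul]
  rw [hL, hperm, ← hk]
  have : (MulAction.toPerm (g ^ k : (ZMod p)ˣ) : Equiv.Perm (ZMod p)) =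
      (MulAction.toPerm g : Equiv.Perm (ZMod p)) ^ k := by
    simpa using map_pow (MulAction.toPermHom (ZMod p)ˣ (ZMod p)) g k
  rw [this, map_pow, zol_sign_gen p hp g hg]
  push_cast
  ring
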